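/- Let 0 < ε < 1/9 and let p, q ∈ ℝ² be distinct points. Then for every point a ∈ Ā(p,q) and every point b ∈ B(p,q), one has (1 + ε)·‖a − p‖ + (1 + ε/3)·‖p − q‖ + (1 + ε)·‖q − b‖ ≤ (1 + ε)·‖a − b‖. -/

import Mathlib

set_option maxHeartbeats 800000


/-- The cone `W₁` with apex `p`, axis direction `q - p`, and aperture `√ε/2`. -/
def W1 (ε : ℝ) (p q : EuclideanSpace ℝ (Fin 2)) : Set (EuclideanSpace ℝ (Fin 2)) :=
  {x | x = p ∨ InnerProductGeometry.angle (x - p) (q - p) ≤ Real.sqrt ε / 4}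

/-- The cone `W₂` with apex `q`, axis direction `q - p`, and aperture `√ε`. -/
def W2 (ε : ℝ) (p q : EuclideanSpace ℝ (Fin 2)) : Set (EuclideanSpace ℝ (Fin 2)) :=
  {x | x = q ∨ InnerProductGeometry.angle (x - q) (q - p) ≤ Real.sqrt ε / 2}

/-- The region `B(p,q) = W₁ ∩ W₂`. -/
def Bset (ε : ℝ) (p q : EuclideanSpace ℝ (Fin 2)) : Set (EuclideanSpace ℝ (Fin 2)) :=
  W1 ε p q ∩ W2 ε p q

/-- The segment `Ā(p,q)` of length `(√ε/2)·‖q-p‖` on the line `pq`, with one endpoint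
at `p`, emanating away from `q`. -/
def Abar (ε : ℝ) (p q : EuclideanSpace ℝ (Fin 2)) : Set (EuclideanSpace ℝ (Fin 2)) :=
  {x | ∃ t : ℝ, 0 ≤ t ∧ t ≤ Real.sqrt ε / 2 * ‖q - p‖ ∧
    x = p - (t / ‖q - p‖) • (q - p)}

/-- For all `a ∈ Ā(p,q)` and `b ∈ B(p,q)`:
`(1+ε)·‖a-p‖ + (1+ε/3)·‖p-q‖ + (1+ε)·‖q-b‖ ≤ (1+ε)·‖a-b‖`. -/
theorem key_ineq_Abar_B (ε : ℝ) (hε0 : 0 < ε) (hε1 : ε < 1 / 9)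
    (p q : EuclideanSpace ℝ (Fin 2)) (hpq : p ≠ q)
    (a b : EuclideanSpace ℝ (Fin 2)) (ha : a ∈ Abar ε p q) (hb : b ∈ Bset ε p q) :
    (1 + ε) * ‖a - p‖ + (1 + ε / 3) * ‖p - q‖ + (1 + ε) * ‖q - b‖ ≤
      (1 + ε) * ‖a - b‖ := by
  obtain ⟨-, hb2⟩ := hb
  obtain ⟨t, ht0, ht1, rfl⟩ := ha
  have hqp : q - p ≠ 0 := sub_ne_zero.mpr (Ne.symm hpq)
  set d := ‖q - p‖ with hd_def
  have hd : 0 < d := norm_pos_iff.mpr hqp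
  set s := ‖b - q‖ with hs_def
  have hs : 0 ≤ s := norm_nonneg _
  set I := (inner ℝ (b - q) (q - p) : ℝ) with hI_def
  set r := Real.sqrt ε with hr_def
  have hr0 : 0 < r := Real.sqrt_pos.mpr hε0
  have hr2 : r ^ 2 = ε := Real.sq_sqrt hε0.le
  have hr3 : r < 1 / 3 := by
    have h := Real.sqrt_lt_sqrt hε0.le hε1
    rwa [show (1/9:ℝ) = (1/3)^2 by norm_num, Real.sqrt_sq (by norm_num)] at h
  set C := Real.cos (r / 2) with hC_def
  have hC1 : C ≤ 1 := Real.cos_le_one _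
  have hC2 : 1 - ε / 8 ≤ C := by
    have h := Real.one_sub_sq_div_two_le_cos (x := r / 2)
    nlinarith
  have hIC : s * d * C ≤ I := by
    rcases eq_or_ne b q with rfl | hbq
    · simp [hI_def, hs_def]
    · rcases hb2 with rfl | hang
      · exact absurd rfl hbq
      · have hcos := InnerProductGeometry.cos_angle_mul_norm_mul_norm (b - q) (q - p)
        have hmono : C ≤ Real.cos (InnerProductGeometry.angle (b - q) (q - p)) :=
          Real.cos_le_cos_of_nonneg_of_le_pi (InnerProductGeometry.angle_nonneg _ _)
            (by nlinarith [Real.pi_gt_three]) hang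
        nlinarith [mul_le_mul_of_nonneg_right hmono (mul_nonneg hs hd.le)]
  have hap : ‖p - (t / d) • (q - p) - p‖ = t := by
    have h : p - (t / d) • (q - p) - p = -((t / d) • (q - p)) := by module
    rw [h, norm_neg, norm_smul, Real.norm_eq_abs, abs_of_nonneg (by positivity)]
    field_simp
    rw [hd_def]
  have h1td : (0:ℝ) ≤ 1 + t / d := by positivity
  have habsq : ‖p - (t / d) • (q - p) - b‖ ^ 2
      = s ^ 2 + 2 * ((1 + t / d) * I) + ((1 + t / d) * d) ^ 2 := by
    have h : p - (t / d) • (q - p) - b = -((b - q) + (1 + t / d) • (q - p)) := by module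
    rw [h, norm_neg, norm_add_sq_real, real_inner_smul_right, norm_smul,
      Real.norm_eq_abs, abs_of_nonneg h1td]
    try ring
  have htd : (1 + t / d) * d = d + t := by field_simp
  have hstep : (d + t) * (s * C) ≤ (1 + t / d) * I := by
    calc (d + t) * (s * C) = (1 + t / d) * (s * d * C) := by field_simp
      _ ≤ (1 + t / d) * I := mul_le_mul_of_nonneg_left hIC h1td
  set N := ‖p - (t / d) • (q - p) - b‖ with hN_def
  have hN0 : 0 ≤ N := norm_nonneg _
  have hN2 : s ^ 2 + (d + t) ^ 2 + 2 * ((d + t) * s) * (1 - ε / 8) ≤ N ^ 2 := by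
    have hdt : (0:ℝ) ≤ (d + t) * s := by positivity
    have h2 := mul_le_mul_of_nonneg_left hC2 hdt
    have h3 : s ^ 2 + (d + t) ^ 2 + 2 * ((d + t) * (s * C)) ≤ N ^ 2 := by
      rw [habsq, htd]; linarith
    nlinarith
  have hpqd : ‖p - q‖ = d := by rw [hd_def, norm_sub_rev]
  have hqbs : ‖q - b‖ = s := by rw [hs_def, norm_sub_rev]
  rw [hap, hpqd, hqbs]
  have hN2' : (1 + ε) ^ 2 * (s ^ 2 + (d + t) ^ 2 + 2 * ((d + t) * s) * (1 - ε / 8))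
      ≤ (1 + ε) ^ 2 * N ^ 2 := by
    exact mul_le_mul_of_nonneg_left hN2 (by positivity)
  have hsq : ((1 + ε) * t + (1 + ε / 3) * d + (1 + ε) * s) ^ 2 ≤ ((1 + ε) * N) ^ 2 := by
    nlinarith [hN2', mul_nonneg hs hd.le,
      mul_nonneg (mul_nonneg hs hd.le) hε0.le,
      mul_nonneg (mul_nonneg (mul_nonneg hs hd.le) hε0.le) hε0.le,
      mul_nonneg (mul_nonneg hs (by linarith : (0:ℝ) ≤ r / 2 * d - t)) hε0.le,
      mul_nonneg (mul_nonneg (mul_nonneg hs (by linarith : (0:ℝ) ≤ r / 2 * d - t)) hε0.le) hε0.le,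
      mul_nonneg (mul_nonneg (mul_nonneg hs hd.le) hε0.le) (by linarith : (0:ℝ) ≤ 1/3 - r),
      mul_nonneg (mul_nonneg (mul_nonneg (mul_nonneg hs hd.le) hε0.le) hε0.le) (by linarith : (0:ℝ) ≤ 1/3 - r),
      mul_nonneg ht0 hd.le, mul_nonneg (mul_nonneg ht0 hd.le) hε0.le,
      sq_nonneg d, mul_nonneg (mul_nonneg hd.le hd.le) hε0.le,
      mul_nonneg (mul_nonneg (mul_nonneg hd.le hd.le) hε0.le) hε0.le]
  have hL0 : 0 ≤ (1 + ε) * t + (1 + ε / 3) * d + (1 + ε) * s := by positivity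
  have hR0 : 0 ≤ (1 + ε) * N := by positivity
  linarith [(pow_le_pow_iff_left₀ hL0 hR0 (two_ne_zero)).mp hsq]
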